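/- Suppose functions fₙ : [0,∞) → ℝ satisfy f₀ = 1, fₙ(0) = 0 for n ≥ 1, and the integral recurrence (n+1)·fₙ(y) = ∫₀^y fₙ₋₁(s)/(y−s+1) ds + ∫₀^y fₙ₋₁(s)/(s+n) ds for n ≥ 1, y ≥ 0, where each fₙ₋₁ is continuous. Then fₙ is differentiable on (0,∞) and fₙ′(y) = fₙ₋₁(y)/(y+n) for all y ≥ 0 and n ≥ 1. -/

import Mathlib

open MeasureTheory Set intervalIntegral

lemma swap_tri (F : ℝ → ℝ → ℝ) (hF : Continuous (Function.uncurry F)) {y : ℝ} (hy : 0 ≤ y) :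
    ∫ t in (0:ℝ)..y, (∫ s in (0:ℝ)..t, F s t) = ∫ s in (0:ℝ)..y, ∫ t in s..y, F s t := by
  have hFi : IntegrableOn (Function.uncurry F) (Ioc (0:ℝ) y ×ˢ Ioc (0:ℝ) y) :=
    (hF.continuousOn.integrableOn_compact (isCompact_Icc.prod isCompact_Icc)).mono_set
      (prod_mono Ioc_subset_Icc_self Ioc_subset_Icc_self)
  set J : ℝ × ℝ → ℝ := indicator {p : ℝ × ℝ | p.1 ≤ p.2} (Function.uncurry F) with hJdef
  have hJ : IntegrableOn J (Ioc (0:ℝ) y ×ˢ Ioc (0:ℝ) y) :=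
    hFi.indicator (measurableSet_le measurable_fst measurable_snd)
  have hint : Integrable (Function.uncurry fun s t => J (s, t))
      ((volume.restrict (Ioc (0:ℝ) y)).prod (volume.restrict (Ioc (0:ℝ) y))) := by
    rw [Measure.prod_restrict, ← Measure.volume_eq_prod]
    exact (Function.uncurry_curry J).symm ▸ hJ
  have hswap := MeasureTheory.integral_integral_swap (f := fun s t => J (s, t)) hint
  have hL : ∫ t in (0:ℝ)..y, (∫ s in (0:ℝ)..t, F s t)
      = ∫ t in Ioc (0:ℝ) y, ∫ s in Ioc (0:ℝ) y, J (s, t) := by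
    rw [integral_of_le hy]
    refine setIntegral_congr_fun measurableSet_Ioc (fun t ht => ?_)
    have h1 : (fun s => J (s, t)) = indicator (Iic t) (fun s => F s t) := by
      funext s
      by_cases h : s ≤ t <;> simp [hJdef, indicator, Function.uncurry, h]
    rw [h1, setIntegral_indicator measurableSet_Iic, Ioc_inter_Iic, min_eq_right ht.2,
      integral_of_le ht.1.le]
  have hR : ∫ s in (0:ℝ)..y, (∫ t in s..y, F s t)
      = ∫ s in Ioc (0:ℝ) y, ∫ t in Ioc (0:ℝ) y, J (s, t) := by
    rw [integral_of_le hy]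
    refine setIntegral_congr_fun measurableSet_Ioc (fun s hs => ?_)
    have h1 : (fun t => J (s, t)) = indicator (Ici s) (fun t => F s t) := by
      funext t
      by_cases h : s ≤ t <;> simp [hJdef, indicator, Function.uncurry, h]
    have h2 : Ioc (0:ℝ) y ∩ Ici s = Icc s y := by
      ext t
      simp only [mem_inter_iff, mem_Ioc, mem_Ici, mem_Icc]
      constructor
      · rintro ⟨⟨_, h2⟩, h3⟩; exact ⟨h3, h2⟩
      · rintro ⟨h1', h2⟩; exact ⟨⟨lt_of_lt_of_le hs.1 h1', h2⟩, h1'⟩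
    rw [h1, setIntegral_indicator measurableSet_Ici, h2, integral_Icc_eq_integral_Ioc,
      integral_of_le hs.2]
  rw [hL, hR, ← hswap]

-- interval integrability of `f s / (s + c)` on `[a, b] ⊆ [0, ∞)` for `c ≥ 1`
lemma ii1 {f : ℝ → ℝ} (hf : ContinuousOn f (Ici 0)) {b c : ℝ} (hb : 0 ≤ b) (hc : 1 ≤ c) :
    IntervalIntegrable (fun s => f s / (s + c)) volume 0 b := by
  apply ContinuousOn.intervalIntegrable
  rw [uIcc_of_le hb]
  apply ContinuousOn.div
  · exact hf.mono (fun x hx => hx.1)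
  · exact (continuousOn_id.add continuousOn_const)
  · intro x hx
    have : (0:ℝ) < x + c := by nlinarith [hx.1]
    exact ne_of_gt this

lemma ii2 {f : ℝ → ℝ} (hf : ContinuousOn f (Ici 0)) {b : ℝ} (hb : 0 ≤ b) :
    IntervalIntegrable (fun s => f s / (b - s + 1)) volume 0 b := by
  apply ContinuousOn.intervalIntegrable
  rw [uIcc_of_le hb]
  apply ContinuousOn.div
  · exact hf.mono (fun x hx => hx.1)
  · fun_prop
  · intro x hx
    have : (0:ℝ) < b - x + 1 := by nlinarith [hx.2]
    exact ne_of_gt this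

lemma key (f : ℕ → ℝ → ℝ)
    (hcont : ∀ n, ContinuousOn (f n) (Ici (0:ℝ)))
    (hf0 : ∀ y : ℝ, 0 ≤ y → f 0 y = 1)
    (hrec : ∀ n : ℕ, 1 ≤ n → ∀ y : ℝ, 0 ≤ y →
      ((n : ℝ) + 1) * f n y
        = (∫ s in (0:ℝ)..y, f (n - 1) s / (y - s + 1))
          + ∫ s in (0:ℝ)..y, f (n - 1) s / (s + n)) :
    ∀ n : ℕ, 1 ≤ n → ∀ y : ℝ, 0 ≤ y →
      f n y = ∫ s in (0:ℝ)..y, f (n - 1) s / (s + (n:ℝ)) := by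
  intro n hn
  induction n, hn using Nat.le_induction with
  | base =>
    intro y hy
    have h := hrec 1 le_rfl y hy
    norm_num at h ⊢
    -- h : (1 + 1) * f 1 y = ∫ s in 0..y, f 0 s / (y - s + 1) + ∫ s in 0..y, f 0 s / (s + 1)
    have e1 : (∫ s in (0:ℝ)..y, f 0 s / (y - s + 1)) = ∫ s in (0:ℝ)..y, 1 / (y - s + 1) := by
      apply integral_congr
      intro s hs
      beta_reduce
      rw [uIcc_of_le hy] at hs
      rw [hf0 s hs.1]
    have e2 : (∫ s in (0:ℝ)..y, f 0 s / (s + 1)) = ∫ s in (0:ℝ)..y, 1 / (s + 1) := by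
      apply integral_congr
      intro s hs
      beta_reduce
      rw [uIcc_of_le hy] at hs
      rw [hf0 s hs.1]
    have e3 : (∫ s in (0:ℝ)..y, 1 / (y - s + 1)) = ∫ s in (0:ℝ)..y, 1 / (s + 1) := by
      have := integral_comp_sub_left (a := (0:ℝ)) (b := y) (fun u => 1 / (u + 1)) y
      simpa using this
    rw [e1, e2, e3] at h
    rw [e2]
    linarith
  | succ n hn ih =>
    intro y hy
    have hnR : (1:ℝ) ≤ (n:ℝ) := by exact_mod_cast hn
    -- clean up the recurrence at n+1
    have h := hrec (n + 1) (by omega) y hy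
    simp only [Nat.add_sub_cancel] at h
    push_cast at h
    set A := ∫ s in (0:ℝ)..y, f n s / (y - s + 1) with hA
    set B := ∫ s in (0:ℝ)..y, f n s / (s + ((n:ℝ) + 1)) with hB
    -- continuous global version of f (n-1) s / (s + n)
    set c : ℝ → ℝ := fun s => f (n - 1) (max s 0) / (max s 0 + n) with hcdef
    have hmaxc : Continuous fun s : ℝ => max s 0 := continuous_id.max continuous_const
    have hc : Continuous c := by
      apply Continuous.div
      · exact (hcont (n - 1)).comp_continuous hmaxc (fun x => mem_Ici.mpr (le_max_right _ _))
      · exact hmaxc.add continuous_const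
      · intro x
        have : (0:ℝ) < max x 0 + n := by nlinarith [le_max_right x (0:ℝ)]
        exact ne_of_gt this
    have hcg : ∀ s : ℝ, 0 ≤ s → c s = f (n - 1) s / (s + n) := by
      intro s hs; simp [hcdef, max_eq_left hs]
    have hfnc : ∀ t : ℝ, 0 ≤ t → f n t = ∫ s in (0:ℝ)..t, c s := by
      intro t ht
      rw [ih t ht]
      apply integral_congr
      intro s hs
      beta_reduce
      rw [uIcc_of_le ht] at hs
      exact (hcg s hs.1).symm
    -- the continuous kernel in t
    set h1 : ℝ → ℝ := fun t => 1 / (max (y - t) 0 + 1) - ((n:ℝ) + 1) / (max t 0 + ((n:ℝ) + 1))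
      with hh1def
    have hh1 : Continuous h1 := by
      apply Continuous.sub
      · apply Continuous.div continuous_const
        · fun_prop
        · intro x
          have : (0:ℝ) < max (y - x) 0 + 1 := by nlinarith [le_max_right (y - x) (0:ℝ)]
          exact ne_of_gt this
      · apply Continuous.div continuous_const
        · fun_prop
        · intro x
          have : (0:ℝ) < max x 0 + ((n:ℝ) + 1) := by nlinarith [le_max_right x (0:ℝ)]
          exact ne_of_gt this
    have hh1v : ∀ t : ℝ, 0 ≤ t → t ≤ y →
        h1 t = 1 / (y - t + 1) - ((n:ℝ) + 1) / (t + ((n:ℝ) + 1)) := by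
      intro t h0 h1'
      simp [hh1def, max_eq_left (by linarith : (0:ℝ) ≤ y - t), max_eq_left h0]
    -- the continuous kernel in (s, u)
    set k : ℝ → ℝ → ℝ := fun s u =>
      1 / (max (u - s) 0 + 1) - ((n:ℝ) + 1) / (max u 0 + ((n:ℝ) + 1)) with hkdef
    have hk : Continuous (Function.uncurry k) := by
      apply Continuous.sub
      · apply Continuous.div continuous_const
        · fun_prop
        · intro x
          have : (0:ℝ) < max (x.2 - x.1) 0 + 1 := by nlinarith [le_max_right (x.2 - x.1) (0:ℝ)]
          exact ne_of_gt this
      · apply Continuous.div continuous_const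
        · fun_prop
        · intro x
          have : (0:ℝ) < max x.2 0 + ((n:ℝ) + 1) := by nlinarith [le_max_right x.2 (0:ℝ)]
          exact ne_of_gt this
    -- Step 1: A - (n+1) B = ∫ t in 0..y, f n t * h1 t
    have step1 : A - ((n:ℝ) + 1) * B = ∫ t in (0:ℝ)..y, f n t * h1 t := by
      have i1 : IntervalIntegrable (fun t => f n t / (y - t + 1)) volume 0 y :=
        ii2 (hcont n) hy
      have i2 : IntervalIntegrable (fun t => ((n:ℝ) + 1) * (f n t / (t + ((n:ℝ) + 1))))
          volume 0 y := (ii1 (hcont n) hy (by linarith)).const_mul _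
      have : (∫ t in (0:ℝ)..y, f n t * h1 t)
          = ∫ t in (0:ℝ)..y,
              (f n t / (y - t + 1) - ((n:ℝ) + 1) * (f n t / (t + ((n:ℝ) + 1)))) := by
        apply integral_congr
        intro t ht
        beta_reduce
        rw [uIcc_of_le hy] at ht
        rw [hh1v t ht.1 ht.2]
        ring
      rw [this, integral_sub i1 i2, intervalIntegral.integral_const_mul]
    -- Step 2-5
    have step2 : (∫ t in (0:ℝ)..y, f n t * h1 t)
        = ∫ t in (0:ℝ)..y, (∫ s in (0:ℝ)..t, c s * h1 t) := by
      apply integral_congr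
      intro t ht
      beta_reduce
      rw [uIcc_of_le hy] at ht
      rw [hfnc t ht.1, ← intervalIntegral.integral_mul_const]
    have step4 : (∫ t in (0:ℝ)..y, (∫ s in (0:ℝ)..t, c s * h1 t))
        = ∫ s in (0:ℝ)..y, ∫ t in s..y, c s * h1 t := by
      apply swap_tri (fun s t => c s * h1 t) ?_ hy
      exact (hc.comp continuous_fst).mul (hh1.comp continuous_snd)
    -- Step 6: inner kernel substitution
    have step6 : ∀ s : ℝ, 0 ≤ s → s ≤ y →
        (∫ t in s..y, h1 t) = ∫ u in s..y, k s u := by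
      intro s h0 hsy
      have e1 : (∫ t in s..y, h1 t)
          = ∫ t in s..y, (1 / (y - t + 1) - ((n:ℝ) + 1) / (t + ((n:ℝ) + 1))) := by
        apply integral_congr
        intro t ht
        beta_reduce
        rw [uIcc_of_le hsy] at ht
        exact hh1v t (le_trans h0 ht.1) ht.2
      have e2 : (∫ u in s..y, k s u)
          = ∫ u in s..y, (1 / (u - s + 1) - ((n:ℝ) + 1) / (u + ((n:ℝ) + 1))) := by
        apply integral_congr
        intro u hu
        beta_reduce
        rw [uIcc_of_le hsy] at hu
        simp [hkdef, max_eq_left (by linarith [hu.1] : (0:ℝ) ≤ u - s),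
          max_eq_left (le_trans h0 hu.1)]
      have j1 : IntervalIntegrable (fun t => 1 / (y - t + 1)) volume s y := by
        apply ContinuousOn.intervalIntegrable
        rw [uIcc_of_le hsy]
        apply ContinuousOn.div continuousOn_const
        · fun_prop
        · intro x hx
          have : (0:ℝ) < y - x + 1 := by nlinarith [hx.2]
          exact ne_of_gt this
      have j2 : IntervalIntegrable (fun t => ((n:ℝ) + 1) / (t + ((n:ℝ) + 1))) volume s y := by
        apply ContinuousOn.intervalIntegrable
        rw [uIcc_of_le hsy]
        apply ContinuousOn.div continuousOn_const
        · fun_prop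
        · intro x hx
          have : (0:ℝ) < x + ((n:ℝ) + 1) := by nlinarith [hx.1, h0]
          exact ne_of_gt this
      have j3 : IntervalIntegrable (fun u => 1 / (u - s + 1)) volume s y := by
        apply ContinuousOn.intervalIntegrable
        rw [uIcc_of_le hsy]
        apply ContinuousOn.div continuousOn_const
        · fun_prop
        · intro x hx
          have : (0:ℝ) < x - s + 1 := by nlinarith [hx.1]
          exact ne_of_gt this
      have e3 : (∫ t in s..y, 1 / (y - t + 1)) = ∫ u in s..y, 1 / (u - s + 1) := by
        have := integral_comp_sub_left (a := s) (b := y) (fun u => 1 / (u - s + 1)) (y + s)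
        simp only [add_sub_cancel_right, add_sub_cancel_left] at this
        rw [← this]
        apply integral_congr
        intro t _
        beta_reduce
        ring_nf
      rw [e1, e2, integral_sub j1 j2, integral_sub j3 j2, e3]
    -- Step 7: put together and swap again
    have step7 : A - ((n:ℝ) + 1) * B = ∫ u in (0:ℝ)..y, (∫ s in (0:ℝ)..u, c s * k s u) := by
      rw [step1, step2, step4]
      have e : (∫ s in (0:ℝ)..y, ∫ t in s..y, c s * h1 t)
          = ∫ s in (0:ℝ)..y, ∫ u in s..y, c s * k s u := by
        apply integral_congr
        intro s hs
        beta_reduce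
        rw [uIcc_of_le hy] at hs
        rw [intervalIntegral.integral_const_mul, intervalIntegral.integral_const_mul, step6 s hs.1 hs.2]
      rw [e]
      exact (swap_tri (fun s u => c s * k s u)
        ((hc.comp continuous_fst).mul (hk.comp (continuous_fst.prodMk continuous_snd)))
        hy).symm
    -- Step 8: inner integral vanishes
    have step8 : ∀ u : ℝ, 0 ≤ u → (∫ s in (0:ℝ)..u, c s * k s u) = 0 := by
      intro u hu
      have hval : (∫ s in (0:ℝ)..u, c s * k s u)
          = ∫ s in (0:ℝ)..u, (u + ((n:ℝ) + 1))⁻¹ *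
              (f (n - 1) s / (u - s + 1) - (n:ℝ) * (f (n - 1) s / (s + (n:ℝ)))) := by
        apply integral_congr
        intro s hs
        beta_reduce
        rw [uIcc_of_le hu] at hs
        rw [hcg s hs.1]
        simp only [hkdef]
        rw [max_eq_left (by linarith [hs.2] : (0:ℝ) ≤ u - s), max_eq_left hu]
        have p1 : s + (n:ℝ) ≠ 0 := ne_of_gt (by nlinarith [hs.1])
        have p2 : u - s + 1 ≠ 0 := ne_of_gt (by nlinarith [hs.2])
        have p3 : u + ((n:ℝ) + 1) ≠ 0 := ne_of_gt (by nlinarith)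
        field_simp
        ring
      rw [hval, intervalIntegral.integral_const_mul]
      have iA : IntervalIntegrable (fun s => f (n - 1) s / (u - s + 1)) volume 0 u :=
        ii2 (hcont _) hu
      have iB : IntervalIntegrable (fun s => (n:ℝ) * (f (n - 1) s / (s + (n:ℝ)))) volume 0 u :=
        (ii1 (hcont _) hu hnR).const_mul _
      rw [integral_sub iA iB, intervalIntegral.integral_const_mul]
      have hihn := ih u hu
      have hfirst : (∫ s in (0:ℝ)..u, f (n - 1) s / (u - s + 1)) = (n:ℝ) * f n u := by
        have hr := hrec n hn u hu
        rw [← hihn] at hr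
        linarith
      rw [hfirst, ← hihn]
      ring
    have hAB : A - ((n:ℝ) + 1) * B = 0 := by
      rw [step7]
      have e0 : (∫ u in (0:ℝ)..y, (∫ s in (0:ℝ)..u, c s * k s u))
          = ∫ u in (0:ℝ)..y, (0:ℝ) := by
        apply integral_congr
        intro u hu
        beta_reduce
        rw [uIcc_of_le hy] at hu
        exact step8 u hu.1
      rw [e0]
      simp
    have hgoal : f (n + 1) y = B := by
      have hpos : ((n:ℝ) + 1 + 1) ≠ 0 := by positivity
      have : ((n:ℝ) + 1 + 1) * f (n + 1) y = ((n:ℝ) + 1 + 1) * B := by linarith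
      exact mul_left_cancel₀ hpos this
    simp only [Nat.add_sub_cancel]
    push_cast
    rw [hgoal, hB]


theorem stmt_2 (f : ℕ → ℝ → ℝ)
    (hcont : ∀ n, ContinuousOn (f n) (Ici (0:ℝ)))
    (hf0 : ∀ y : ℝ, 0 ≤ y → f 0 y = 1)
    (hzero : ∀ n : ℕ, 1 ≤ n → f n 0 = 0)
    (hrec : ∀ n : ℕ, 1 ≤ n → ∀ y : ℝ, 0 ≤ y →
      ((n : ℝ) + 1) * f n y
        = (∫ s in (0:ℝ)..y, f (n - 1) s / (y - s + 1))
          + ∫ s in (0:ℝ)..y, f (n - 1) s / (s + n)) :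
    ∀ n : ℕ, 1 ≤ n →
      DifferentiableOn ℝ (f n) (Ioi (0:ℝ)) ∧
      ∀ y : ℝ, 0 ≤ y →
        HasDerivWithinAt (f n) (f (n - 1) y / (y + n)) (Ici (0:ℝ)) y := by
  have hkey := key f hcont hf0 hrec
  intro n hn
  have hnR : (1:ℝ) ≤ (n:ℝ) := by exact_mod_cast hn
  set c : ℝ → ℝ := fun s => f (n - 1) (max s 0) / (max s 0 + n) with hcdef
  have hmaxc : Continuous fun s : ℝ => max s 0 := continuous_id.max continuous_const
  have hc : Continuous c := by
    apply Continuous.div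
    · exact (hcont (n - 1)).comp_continuous hmaxc (fun x => mem_Ici.mpr (le_max_right _ _))
    · exact hmaxc.add continuous_const
    · intro x
      have : (0:ℝ) < max x 0 + n := by nlinarith [le_max_right x (0:ℝ)]
      exact ne_of_gt this
  have hcg : ∀ s : ℝ, 0 ≤ s → c s = f (n - 1) s / (s + n) := by
    intro s hs; simp [hcdef, max_eq_left hs]
  have heq : ∀ u ∈ Ici (0:ℝ), f n u = ∫ s in (0:ℝ)..u, c s := by
    intro u hu
    rw [hkey n hn u hu]
    apply integral_congr
    intro s hs
    beta_reduce
    rw [uIcc_of_le hu] at hs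
    exact (hcg s hs.1).symm
  have hder : ∀ y : ℝ, 0 ≤ y → HasDerivWithinAt (f n) (f (n - 1) y / (y + n)) (Ici (0:ℝ)) y := by
    intro y hy
    have H : HasDerivAt (fun u => ∫ s in (0:ℝ)..u, c s) (c y) y :=
      (hc.integral_hasStrictDerivAt 0 y).hasDerivAt
    have H2 := (H.hasDerivWithinAt (s := Ici (0:ℝ))).congr heq (heq y hy)
    rwa [hcg y hy] at H2
  refine ⟨fun y hy => ?_, hder⟩
  exact ((hder y (le_of_lt hy)).mono (Ioi_subset_Ici le_rfl)).differentiableWithinAt
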